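/- Let (Aₙ)ₙ be a sequence of upper-triangular nonnegative column-allowable 2×2 matrices Aₙ = [[aₙ,bₙ],[0,dₙ]] with dₙ > 0 for all n. If aₖ/dₖ ≥ 1 for every k and ∑ₖ bₖ/dₖ = ∞, then d_columns(A₁A₂⋯Aₙ) → 0 and d_columns(AₙAₙ₋₁⋯A₁) → 0 as n → ∞. -/

import Mathlib

open Matrix Filter

/-- A 2×2 real matrix is nonnegative and column-allowable. -/
def ColAllowable (A : Matrix (Fin 2) (Fin 2) ℝ) : Prop :=
  (∀ i j, 0 ≤ A i j) ∧ 0 < A 0 0 + A 1 0 ∧ 0 < A 0 1 + A 1 1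

/-- The distance between the (normalized) columns of `A`. -/
noncomputable def dcols (A : Matrix (Fin 2) (Fin 2) ℝ) : ℝ :=
  |A.det| / ((A 0 0 + A 1 0) * (A 0 1 + A 1 1))

lemma dcols_nonneg (P : Matrix (Fin 2) (Fin 2) ℝ)
    (h10 : P 1 0 = 0) (h00 : 0 < P 0 0) (h11 : 0 < P 1 1) (h01 : 0 ≤ P 0 1) :
    0 ≤ dcols P := by
  unfold dcols
  apply div_nonneg (abs_nonneg _)
  rw [h10]
  positivity

lemma dcols_bound (P : Matrix (Fin 2) (Fin 2) ℝ) (s : ℝ)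
    (h10 : P 1 0 = 0) (h00 : 0 < P 0 0) (h11 : 0 < P 1 1) (h01 : 0 ≤ P 0 1)
    (hs : 0 ≤ s) (hle : s * P 1 1 ≤ P 0 1) :
    dcols P ≤ 1 / (s + 1) := by
  unfold dcols
  rw [Matrix.det_fin_two, h10, mul_zero, sub_zero,
    abs_of_nonneg (by positivity), add_zero]
  rw [div_le_div_iff₀ (by positivity) (by positivity)]
  nlinarith [mul_le_mul_of_nonneg_left hle h00.le]

theorem stmt5 (A : ℕ → Matrix (Fin 2) (Fin 2) ℝ)
    (hA : ∀ n, ColAllowable (A n))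
    (htri : ∀ n, A n 1 0 = 0) (hd : ∀ n, 0 < A n 1 1)
    (hratio : ∀ k, 1 ≤ A k 0 0 / A k 1 1)
    (hsum : Tendsto (fun n => ∑ k ∈ Finset.range n, A k 0 1 / A k 1 1)
      atTop atTop) :
    Tendsto (fun n => dcols (((List.range n).map A).prod)) atTop (nhds 0) ∧
    Tendsto (fun n => dcols (((List.range n).reverse.map A).prod)) atTop (nhds 0) := by
  set S : ℕ → ℝ := fun n => ∑ k ∈ Finset.range n, A k 0 1 / A k 1 1 with hS
  have hnn : ∀ k, ∀ i j, 0 ≤ A k i j := fun k => (hA k).1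
  have hda : ∀ k, A k 1 1 ≤ A k 0 0 := fun k => (one_le_div (hd k)).mp (hratio k)
  have ha : ∀ k, 0 < A k 0 0 := fun k => lt_of_lt_of_le (hd k) (hda k)
  have hS0 : ∀ n, 0 ≤ S n := by
    intro n
    apply Finset.sum_nonneg
    intro k _
    exact div_nonneg (hnn k 0 1) (hd k).le
  have hSsucc : ∀ n, S (n + 1) = S n + A n 0 1 / A n 1 1 := by
    intro n; simp [hS, Finset.sum_range_succ]
  -- the invariant for both products
  have hL : ∀ n, (((List.range n).map A).prod 1 0 = 0 ∧
      0 < ((List.range n).map A).prod 0 0 ∧ 0 < ((List.range n).map A).prod 1 1 ∧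
      0 ≤ ((List.range n).map A).prod 0 1 ∧
      ((List.range n).map A).prod 1 1 ≤ ((List.range n).map A).prod 0 0 ∧
      S n * ((List.range n).map A).prod 1 1 ≤ ((List.range n).map A).prod 0 1) := by
    intro n
    induction n with
    | zero => simp [hS, Matrix.one_apply]
    | succ n ih =>
      obtain ⟨i10, i00, i11, i01, idom, isum⟩ := ih
      rw [List.range_succ, List.map_append, List.prod_append]
      simp only [List.map_cons, List.map_nil, List.prod_cons, List.prod_nil, mul_one]
      set P := ((List.range n).map A).prod
      have e : ∀ i j, (P * A n) i j = P i 0 * A n 0 j + P i 1 * A n 1 j := by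
        intro i j; rw [Matrix.mul_apply, Fin.sum_univ_two]
      have hb : A n 0 1 = (A n 0 1 / A n 1 1) * A n 1 1 :=
        (div_mul_cancel₀ _ (hd n).ne').symm
      refine ⟨?_, ?_, ?_, ?_, ?_, ?_⟩
      · rw [e, i10, htri n]; ring
      · rw [e, htri n]; simp only [mul_zero, add_zero]; exact mul_pos i00 (ha n)
      · rw [e, i10]; simp only [zero_mul, zero_add]; exact mul_pos i11 (hd n)
      · rw [e]; have := hnn n 0 1; have := hnn n 1 1; positivity
      · rw [e, e, i10, htri n]
        simp only [zero_mul, zero_add, mul_zero, add_zero]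
        exact mul_le_mul idom (hda n) (hd n).le i00.le
      · rw [e, e, i10, hSsucc n]
        simp only [zero_mul, zero_add]
        have h1 : S n * (P 1 1 * A n 1 1) ≤ P 0 1 * A n 1 1 := by
          rw [← mul_assoc]; exact mul_le_mul_of_nonneg_right isum (hd n).le
        have h2 : (A n 0 1 / A n 1 1) * (P 1 1 * A n 1 1) ≤ P 0 0 * A n 0 1 := by
          calc (A n 0 1 / A n 1 1) * (P 1 1 * A n 1 1)
              = ((A n 0 1 / A n 1 1) * A n 1 1) * P 1 1 := by ring
            _ = A n 0 1 * P 1 1 := by rw [div_mul_cancel₀ _ (hd n).ne']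
            _ ≤ A n 0 1 * P 0 0 := mul_le_mul_of_nonneg_left idom (hnn n 0 1)
            _ = P 0 0 * A n 0 1 := mul_comm _ _
        nlinarith
  have hR : ∀ n, (((List.range n).reverse.map A).prod 1 0 = 0 ∧
      0 < ((List.range n).reverse.map A).prod 0 0 ∧
      0 < ((List.range n).reverse.map A).prod 1 1 ∧
      0 ≤ ((List.range n).reverse.map A).prod 0 1 ∧
      ((List.range n).reverse.map A).prod 1 1 ≤ ((List.range n).reverse.map A).prod 0 0 ∧
      S n * ((List.range n).reverse.map A).prod 1 1 ≤ ((List.range n).reverse.map A).prod 0 1) := by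
    intro n
    induction n with
    | zero => simp [hS, Matrix.one_apply]
    | succ n ih =>
      obtain ⟨i10, i00, i11, i01, idom, isum⟩ := ih
      rw [List.range_succ, List.reverse_append]
      simp only [List.reverse_cons, List.reverse_nil, List.nil_append, List.singleton_append,
        List.map_cons, List.prod_cons]
      set Q := ((List.range n).reverse.map A).prod
      have e : ∀ i j, (A n * Q) i j = A n i 0 * Q 0 j + A n i 1 * Q 1 j := by
        intro i j; rw [Matrix.mul_apply, Fin.sum_univ_two]
      have hb : A n 0 1 = (A n 0 1 / A n 1 1) * A n 1 1 := (div_mul_cancel₀ _ (hd n).ne').symm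
      refine ⟨?_, ?_, ?_, ?_, ?_, ?_⟩
      · rw [e, i10, htri n]; ring
      · rw [e, i10]; simp only [mul_zero, add_zero]; exact mul_pos (ha n) i00
      · rw [e, htri n]; simp only [zero_mul, zero_add]; exact mul_pos (hd n) i11
      · rw [e]; have := hnn n 0 0; have := hnn n 0 1; positivity
      · rw [e, e, i10, htri n]
        simp only [mul_zero, add_zero, zero_mul, zero_add]
        exact mul_le_mul (hda n) idom i11.le (hnn n 0 0)
      · rw [e, e, htri n, hSsucc n]
        simp only [zero_mul, zero_add]
        have hbd : 0 ≤ A n 0 1 / A n 1 1 := div_nonneg (hnn n 0 1) (hd n).le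
        have h1 : S n * (A n 1 1 * Q 1 1) ≤ A n 0 0 * Q 0 1 := by
          calc S n * (A n 1 1 * Q 1 1) = A n 1 1 * (S n * Q 1 1) := by ring
            _ ≤ A n 1 1 * Q 0 1 := mul_le_mul_of_nonneg_left isum (hd n).le
            _ ≤ A n 0 0 * Q 0 1 := mul_le_mul_of_nonneg_right (hda n) i01
        have h2 : (A n 0 1 / A n 1 1) * (A n 1 1 * Q 1 1) ≤ A n 0 1 * Q 1 1 := by
          rw [show (A n 0 1 / A n 1 1) * (A n 1 1 * Q 1 1)
              = ((A n 0 1 / A n 1 1) * A n 1 1) * Q 1 1 by ring, ← hb]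
        nlinarith
  have hlim : Tendsto (fun n => 1 / (S n + 1)) atTop (nhds 0) := by
    have h1 : Tendsto (fun n => S n + 1) atTop atTop :=
      tendsto_atTop_add_const_right atTop 1 hsum
    simpa [one_div, Pi.inv_def] using h1.inv_tendsto_atTop
  constructor
  · apply squeeze_zero (fun n => ?_) (fun n => ?_) hlim
    · obtain ⟨i10, i00, i11, i01, _, _⟩ := hL n
      exact dcols_nonneg _ i10 i00 i11 i01
    · obtain ⟨i10, i00, i11, i01, _, isum⟩ := hL n
      exact dcols_bound _ (S n) i10 i00 i11 i01 (hS0 n) isum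
  · apply squeeze_zero (fun n => ?_) (fun n => ?_) hlim
    · obtain ⟨i10, i00, i11, i01, _, _⟩ := hR n
      exact dcols_nonneg _ i10 i00 i11 i01
    · obtain ⟨i10, i00, i11, i01, _, isum⟩ := hR n
      exact dcols_bound _ (S n) i10 i00 i11 i01 (hS0 n) isum
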